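/- Let X be a real normed space, t > 0, and x, y unit vectors. Then (‖x + t·y‖ + ‖t·x − y‖)/2 ≤ 1 + t − (2 − (‖x+y‖ + ‖x−y‖)/2)·min{1, t}. -/
import Mathlib


theorem stmt_8 {X : Type*} [NormedAddCommGroup X] [NormedSpace ℝ X] (x y : X)
    (hx : ‖x‖ = 1) (hy : ‖y‖ = 1) (t : ℝ) (ht : 0 < t) :
    (‖x + t • y‖ + ‖t • x - y‖) / 2 ≤
      1 + t - (2 - (‖x + y‖ + ‖x - y‖) / 2) * min 1 t := by
  rcases le_total t 1 with h | h
  · have hmin : min 1 t = t := min_eq_right h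
    have e1 : x + t • y = t • (x + y) + (1 - t) • x := by module
    have e2 : t • x - y = t • (x - y) + (t - 1) • y := by module
    have h1 : ‖x + t • y‖ ≤ t * ‖x + y‖ + (1 - t) := by
      rw [e1]
      calc ‖t • (x + y) + (1 - t) • x‖ ≤ ‖t • (x + y)‖ + ‖(1 - t) • x‖ := norm_add_le _ _
        _ = t * ‖x + y‖ + (1 - t) := by
            rw [norm_smul, norm_smul, hx, Real.norm_eq_abs, Real.norm_eq_abs,
              abs_of_pos ht, abs_of_nonneg (by linarith)]; ring
    have h2 : ‖t • x - y‖ ≤ t * ‖x - y‖ + (1 - t) := by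
      rw [e2]
      calc ‖t • (x - y) + (t - 1) • y‖ ≤ ‖t • (x - y)‖ + ‖(t - 1) • y‖ := norm_add_le _ _
        _ = t * ‖x - y‖ + (1 - t) := by
            rw [norm_smul, norm_smul, hy, Real.norm_eq_abs, Real.norm_eq_abs,
              abs_of_pos ht, abs_of_nonpos (by linarith)]; ring
    rw [hmin]; linarith
  · have hmin : min 1 t = 1 := min_eq_left h
    have e1 : x + t • y = (x + y) + (t - 1) • y := by module
    have e2 : t • x - y = (x - y) + (t - 1) • x := by module
    have h1 : ‖x + t • y‖ ≤ ‖x + y‖ + (t - 1) := by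
      rw [e1]
      calc ‖(x + y) + (t - 1) • y‖ ≤ ‖x + y‖ + ‖(t - 1) • y‖ := norm_add_le _ _
        _ = ‖x + y‖ + (t - 1) := by
            rw [norm_smul, hy, Real.norm_eq_abs, abs_of_nonneg (by linarith)]; ring
    have h2 : ‖t • x - y‖ ≤ ‖x - y‖ + (t - 1) := by
      rw [e2]
      calc ‖(x - y) + (t - 1) • x‖ ≤ ‖x - y‖ + ‖(t - 1) • x‖ := norm_add_le _ _
        _ = ‖x - y‖ + (t - 1) := by
            rw [norm_smul, hx, Real.norm_eq_abs, abs_of_nonneg (by linarith)]; ring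
    rw [hmin]; linarith
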